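/- Let β > 0, p ≥ 1, n ≥ 1, and let R > 0 satisfy R^p < β + βn/p. Then n ∫₀¹ exp((R^p/β)(1 − r^p)) r^{n−1} dr ≤ 1 + pR^p / (pβ + βn − pR^p). -/

import Mathlib

theorem stmt8 (β p : ℝ) (hβ : 0 < β) (hp : 1 ≤ p) (n : ℕ) (hn : 1 ≤ n)
    (R : ℝ) (hR : 0 < R) (hRp : R ^ p < β + β * n / p) :
    (n:ℝ) * ∫ r in (0:ℝ)..1, Real.exp ((R^p/β) * (1 - r^p)) * r^(n-1) ≤
      1 + p * R^p / (p*β + β*n - p*R^p) := by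
  have hp0 : 0 < p := lt_of_lt_of_le one_pos hp
  have hn0 : n ≠ 0 := by omega
  set c : ℝ := R ^ p / β with hc
  have hRp0 : 0 < R ^ p := Real.rpow_pos_of_pos hR p
  have hc0 : 0 < c := div_pos hRp0 hβ
  -- key smallness: c * p < n + p
  have hcp : c * p < (n : ℝ) + p := by
    have h1 := mul_lt_mul_of_pos_right hRp hp0
    rw [add_mul, div_mul_cancel₀ _ hp0.ne'] at h1
    rw [hc, div_mul_eq_mul_div, div_lt_iff₀ hβ]
    nlinarith
  -- continuity facts
  have hcont_rpow : ∀ q : ℝ, 0 ≤ q → Continuous fun r : ℝ => r ^ q := fun q hq =>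
    Real.continuous_rpow_const hq
  have hcontE : Continuous fun r : ℝ => Real.exp (c * (1 - r ^ p)) :=
    (Real.continuous_exp.comp (continuous_const.mul (continuous_const.sub
      (hcont_rpow p hp0.le))))
  -- the three integrands
  set E : ℝ → ℝ := fun r => Real.exp (c * (1 - r ^ p)) with hE
  have hcontJ : Continuous fun r : ℝ => E r * r ^ (n - 1) :=
    hcontE.mul (continuous_pow _)
  have hcontK : Continuous fun r : ℝ => E r * (r ^ (n - 1) * r ^ p) :=
    hcontE.mul ((continuous_pow _).mul (hcont_rpow p hp0.le))
  have hcontK2 : Continuous fun r : ℝ => E r * (r ^ (n - 1) * r ^ (2 * p)) :=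
    hcontE.mul ((continuous_pow _).mul (hcont_rpow (2*p) (by positivity)))
  set J : ℝ := ∫ r in (0:ℝ)..1, E r * r ^ (n - 1) with hJ
  set K : ℝ := ∫ r in (0:ℝ)..1, E r * (r ^ (n - 1) * r ^ p) with hK
  set K2 : ℝ := ∫ r in (0:ℝ)..1, E r * (r ^ (n - 1) * r ^ (2 * p)) with hK2
  -- power juggling lemma
  have haux : ∀ x : ℝ, 0 ≤ x → x ^ n * x ^ (p - 1) = x ^ (n - 1) * x ^ p := by
    intro x hx
    rcases eq_or_lt_of_le hx with h | h
    · rw [← h]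
      rw [Real.zero_rpow (by linarith : p ≠ 0), zero_pow hn0, zero_mul, mul_zero]
    · have h1 : x ^ n = x ^ (n - 1) * x := by
        conv_lhs => rw [show n = (n - 1) + 1 by omega]
        rw [pow_succ]
      have h2 : x * x ^ (p - 1) = x ^ p := by
        nth_rewrite 1 [← Real.rpow_one x]
        rw [← Real.rpow_add h]; ring_nf
      rw [h1, mul_assoc, h2]
  have haux2 : ∀ x : ℝ, 0 ≤ x → x ^ n * x ^ p * x ^ (p - 1) = x ^ (n - 1) * x ^ (2 * p) := by
    intro x hx
    rcases eq_or_lt_of_le hx with h | h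
    · rw [← h, zero_pow hn0, Real.zero_rpow (by positivity : (2*p:ℝ) ≠ 0),
        Real.zero_rpow (by linarith : p ≠ 0)]
      ring
    · have h2 : x ^ p * x ^ p = x ^ (2 * p) := by
        rw [← Real.rpow_add h]; ring_nf
      calc x ^ n * x ^ p * x ^ (p - 1) = (x ^ n * x ^ (p - 1)) * x ^ p := by ring
        _ = (x ^ (n - 1) * x ^ p) * x ^ p := by rw [haux x hx]
        _ = x ^ (n - 1) * x ^ (2 * p) := by rw [mul_assoc, h2]
  -- derivative of E
  have hder_rpow : ∀ x : ℝ, HasDerivAt (fun r : ℝ => r ^ p) (p * x ^ (p - 1)) x := fun x =>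
    Real.hasDerivAt_rpow_const (Or.inr hp)
  have hderE : ∀ x : ℝ,
      HasDerivAt E (E x * (c * (0 - p * x ^ (p - 1)))) x := by
    intro x
    exact (((hasDerivAt_const x (1:ℝ)).sub (hder_rpow x)).const_mul c).exp
  -- First IBP identity : n * J = 1 + c * p * K
  have id1 : (n : ℝ) * J = 1 + c * p * K := by
    have key : ∫ r in (0:ℝ)..1,
        ((n : ℝ) * (E r * r ^ (n-1)) - c * p * (E r * (r ^ (n-1) * r ^ p))) = 1 := by
      have hF : ∀ x ∈ Set.uIcc (0:ℝ) 1,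
          HasDerivAt (fun r : ℝ => r ^ n * E r)
            ((n : ℝ) * (E x * x ^ (n-1)) - c * p * (E x * (x ^ (n-1) * x ^ p))) x := by
        intro x hx
        have hx0 : (0:ℝ) ≤ x := by
          rw [Set.uIcc_of_le (by norm_num : (0:ℝ) ≤ 1)] at hx
          exact hx.1
        have h := (hasDerivAt_pow n x).mul (hderE x)
        refine h.congr_deriv ?_
        symm
        linear_combination (c * p * E x) * haux x hx0
      have hint : IntervalIntegrable
          (fun x : ℝ => (n : ℝ) * (E x * x ^ (n-1)) - c * p * (E x * (x ^ (n-1) * x ^ p)))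
          MeasureTheory.volume 0 1 :=
        ((continuous_const.mul hcontJ).sub (continuous_const.mul hcontK)).intervalIntegrable 0 1
      rw [intervalIntegral.integral_eq_sub_of_hasDerivAt hF hint]
      simp [hE, Real.zero_rpow hp0.ne', zero_pow hn0]
    rw [intervalIntegral.integral_sub ((hcontJ.intervalIntegrable 0 1).const_mul (n:ℝ))
        ((hcontK.intervalIntegrable 0 1).const_mul (c * p)),
      intervalIntegral.integral_const_mul, intervalIntegral.integral_const_mul] at key
    rw [← hJ, ← hK] at key
    linarith
  -- Second IBP identity : (n + p) * K = 1 + c * p * K2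
  have id2 : ((n : ℝ) + p) * K = 1 + c * p * K2 := by
    have key : ∫ r in (0:ℝ)..1,
        (((n : ℝ) + p) * (E r * (r ^ (n-1) * r ^ p)) - c * p * (E r * (r ^ (n-1) * r ^ (2*p)))) = 1 := by
      have hF : ∀ x ∈ Set.uIcc (0:ℝ) 1,
          HasDerivAt (fun r : ℝ => r ^ n * r ^ p * E r)
            (((n : ℝ) + p) * (E x * (x ^ (n-1) * x ^ p)) - c * p * (E x * (x ^ (n-1) * x ^ (2*p)))) x := by
        intro x hx
        have hx0 : (0:ℝ) ≤ x := by
          rw [Set.uIcc_of_le (by norm_num : (0:ℝ) ≤ 1)] at hx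
          exact hx.1
        have h := ((hasDerivAt_pow n x).mul (hder_rpow x)).mul (hderE x)
        refine h.congr_deriv ?_
        symm
        simp only [Pi.mul_apply]
        linear_combination (-(p * E x)) * haux x hx0 + (c * p * E x) * haux2 x hx0
      have hint : IntervalIntegrable
          (fun x : ℝ => ((n : ℝ) + p) * (E x * (x ^ (n-1) * x ^ p)) - c * p * (E x * (x ^ (n-1) * x ^ (2*p))))
          MeasureTheory.volume 0 1 :=
        ((continuous_const.mul hcontK).sub (continuous_const.mul hcontK2)).intervalIntegrable 0 1
      rw [intervalIntegral.integral_eq_sub_of_hasDerivAt hF hint]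
      simp [hE, Real.zero_rpow hp0.ne', zero_pow hn0, Real.one_rpow]
    rw [intervalIntegral.integral_sub ((hcontK.intervalIntegrable 0 1).const_mul ((n:ℝ) + p))
        ((hcontK2.intervalIntegrable 0 1).const_mul (c * p)),
      intervalIntegral.integral_const_mul, intervalIntegral.integral_const_mul] at key
    rw [← hK, ← hK2] at key
    linarith
  -- K2 ≤ K
  have hK2K : K2 ≤ K := by
    apply intervalIntegral.integral_mono_on (by norm_num)
      (hcontK2.intervalIntegrable 0 1) (hcontK.intervalIntegrable 0 1)
    intro x hx
    have hx0 : (0:ℝ) ≤ x := hx.1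
    have hx1 : x ≤ 1 := hx.2
    have hpow : x ^ (2*p) ≤ x ^ p := by
      rcases eq_or_lt_of_le hx0 with h | h
      · rw [← h, Real.zero_rpow hp0.ne', Real.zero_rpow (by positivity : (2*p) ≠ 0)]
      · exact Real.rpow_le_rpow_of_exponent_ge h hx1 (by linarith)
    have hEx : 0 ≤ E x := (Real.exp_pos _).le
    have hxn : 0 ≤ x ^ (n-1) := pow_nonneg hx0 _
    exact mul_le_mul_of_nonneg_left (mul_le_mul_of_nonneg_left hpow hxn) hEx
  -- K ≥ 0
  have hKnn : 0 ≤ K := by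
    apply intervalIntegral.integral_nonneg (by norm_num)
    intro x hx
    have hx0 : (0:ℝ) ≤ x := hx.1
    positivity
  -- bound K
  have hcp0 : (0:ℝ) ≤ c * p := mul_nonneg hc0.le hp0.le
  have hKle : K * ((n : ℝ) + p - c * p) ≤ 1 := by
    have h1 : c * p * K2 ≤ c * p * K := mul_le_mul_of_nonneg_left hK2K hcp0
    nlinarith
  have hDpos : (0:ℝ) < (n : ℝ) + p - c * p := by linarith
  have hKbound : K ≤ 1 / ((n : ℝ) + p - c * p) := by
    rw [le_div_iff₀ hDpos]; linarith
  -- conclude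
  have hgoal : (n : ℝ) * J ≤ 1 + c * p * (1 / ((n : ℝ) + p - c * p)) := by
    rw [id1]
    have : c * p * K ≤ c * p * (1 / ((n : ℝ) + p - c * p)) :=
      mul_le_mul_of_nonneg_left hKbound hcp0
    linarith
  have hden : ((n : ℝ) + p - c * p) * β = p * β + β * n - p * R ^ p := by
    rw [hc]; field_simp; ring
  have hd2 : (0:ℝ) < p * β + β * n - p * R ^ p := by
    rw [← hden]; exact mul_pos hDpos hβ
  have heq : c * p * (1 / ((n : ℝ) + p - c * p)) = p * R ^ p / (p * β + β * n - p * R ^ p) := by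
    rw [mul_one_div, div_eq_div_iff hDpos.ne' hd2.ne']
    rw [hc]
    field_simp
    ring
  calc (n:ℝ) * ∫ r in (0:ℝ)..1, Real.exp ((R^p/β) * (1 - r^p)) * r^(n-1)
      = (n : ℝ) * J := rfl
    _ ≤ 1 + c * p * (1 / ((n : ℝ) + p - c * p)) := hgoal
    _ = 1 + p * R^p / (p*β + β*n - p*R^p) := by rw [heq]
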